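/- Fix 0 < ε < 1 and integers ξ, η with ξ - η = log₂(SNR), SNR = E_X/E_Z ≥ 1/ε, E_X = 2^ξ, E_Z = 2^η. Let p_l = 1/(1+e^{2^{l-ξ}}), q_l = 1/(1+e^{2^{l-η}}), and let L₁ ≥ -log₂ ε - η, L₂ ≥ -log₂ ε + ξ. Then Σ_{l=-L₁}^{L₂} [H(p_l ⊗ q_l) - H(q_l)] ≥ log₂(1 + SNR) - 5 ε log₂ e, where a ⊗ b = a(1-b) + b(1-a). -/

import Mathlib

noncomputable def binH (p : ℝ) : ℝ :=
  -(p * Real.logb 2 p) - (1 - p) * Real.logb 2 (1 - p)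

lemma binH_eq (p : ℝ) : binH p = Real.binEntropy p / Real.log 2 := by
  unfold binH Real.binEntropy
  rw [Real.log_inv, Real.log_inv, Real.logb, Real.logb]
  ring

lemma binEntropy_inv_one_add_exp (t : ℝ) :
    Real.binEntropy (1 / (1 + Real.exp t)) =
      Real.log (1 + Real.exp t) - t * Real.exp t / (1 + Real.exp t) := by
  have hE : 0 < Real.exp t := Real.exp_pos t
  have h1 : (0:ℝ) < 1 + Real.exp t := by linarith
  unfold Real.binEntropy
  have h2 : 1 - 1 / (1 + Real.exp t) = Real.exp t / (1 + Real.exp t) := by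
    field_simp; ring
  rw [h2, Real.log_inv, Real.log_inv,
    Real.log_div hE.ne' h1.ne', Real.log_exp]
  field_simp
  rw [one_div, Real.log_inv]
  ring

-- lower tail bound: for t ≥ 0
lemma binEntropy_lower (t : ℝ) (ht : 0 ≤ t) :
    Real.binEntropy (1 / (1 + Real.exp t)) ≥ Real.log 2 - t := by
  rw [binEntropy_inv_one_add_exp]
  have hE : 1 ≤ Real.exp t := Real.one_le_exp ht
  have h1 : (0:ℝ) < 1 + Real.exp t := by linarith
  have hlog : Real.log 2 ≤ Real.log (1 + Real.exp t) :=
    Real.log_le_log (by norm_num) (by linarith)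
  have key : t * Real.exp t / (1 + Real.exp t) ≤ t := by
    rw [div_le_iff₀ h1]
    nlinarith [Real.exp_pos t]
  linarith

-- upper tail bound: for t ≥ 1
lemma binEntropy_upper (t : ℝ) (ht : 1 ≤ t) :
    Real.binEntropy (1 / (1 + Real.exp t)) ≤ 3 / t := by
  rw [binEntropy_inv_one_add_exp]
  have hE : 0 < Real.exp t := Real.exp_pos t
  have h1 : (0:ℝ) < 1 + Real.exp t := by linarith
  have ht0 : (0:ℝ) < t := by linarith
  have e1 : Real.log (1 + Real.exp t) = t + Real.log (1 + Real.exp (-t)) := by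
    rw [← Real.log_exp t, ← Real.log_mul hE.ne' (by positivity), Real.log_exp]
    congr 1
    rw [Real.exp_neg]
    field_simp
    ring
  have e2 : Real.log (1 + Real.exp (-t)) ≤ Real.exp (-t) := by
    have := Real.log_le_sub_one_of_pos (show (0:ℝ) < 1 + Real.exp (-t) by positivity)
    linarith
  have e3 : t - t * Real.exp t / (1 + Real.exp t) = t / (1 + Real.exp t) := by
    field_simp; ring
  have e4 : t / (1 + Real.exp t) ≤ t * Real.exp (-t) := by
    rw [Real.exp_neg, ← div_eq_mul_inv]
    exact div_le_div_of_nonneg_left ht0.le hE (by linarith)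
  have e5 : (1 + t) * Real.exp (-t) ≤ 3 / t := by
    rw [Real.exp_neg, ← div_eq_mul_inv, div_le_div_iff₀ hE ht0]
    have hexp3 : Real.exp (t/3) ^ 3 = Real.exp t := by
      rw [← Real.exp_nat_mul]; norm_num; ring_nf
    have h13 : (1:ℝ) + t/3 ≤ Real.exp (t/3) := by
      have := Real.add_one_le_exp (t/3); linarith
    have hc : (1 + t/3)^3 ≤ Real.exp t := by
      rw [← hexp3]
      exact pow_le_pow_left₀ (by positivity) h13 3
    nlinarith
  have hre : Real.exp (-t) * t = t * Real.exp (-t) := mul_comm _ _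
  nlinarith [Real.exp_pos (-t)]

/-- Convolution of Bernoulli parameters. -/
def bconv (a b : ℝ) : ℝ := a * (1 - b) + b * (1 - a)

lemma binEntropy_bconv_ge (a b : ℝ) (ha0 : 0 ≤ a) (ha : a ≤ 1/2) (hb0 : 0 ≤ b) (hb : b ≤ 1/2) :
    Real.binEntropy (bconv a b) ≥ Real.binEntropy a := by
  have h1 : a ≤ bconv a b := by unfold bconv; nlinarith
  have h2 : bconv a b ≤ 1/2 := by unfold bconv; nlinarith
  have h3 : a ∈ Set.Icc (0:ℝ) 2⁻¹ := ⟨ha0, by norm_num at ha ⊢; linarith⟩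
  have h4 : bconv a b ∈ Set.Icc (0:ℝ) 2⁻¹ := ⟨by unfold bconv; nlinarith, by norm_num; linarith⟩
  exact Real.binEntropy_strictMonoOn.monotoneOn h3 h4 h1

lemma sum_shift (a b d : ℤ) (f : ℤ → ℝ) :
    ∑ l ∈ Finset.Icc a b, f (l + d) = ∑ l ∈ Finset.Icc (a+d) (b+d), f l := by
  apply Finset.sum_nbij' (fun l => l + d) (fun l => l - d) <;>
    intros <;> simp_all [Finset.mem_Icc] <;> omega

lemma icc_split (a m b : ℤ) (ha : a ≤ m) (hm : m ≤ b) (f : ℤ → ℝ) :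
    ∑ l ∈ Finset.Icc a b, f l =
      ∑ l ∈ Finset.Icc a (m-1), f l + ∑ l ∈ Finset.Icc m b, f l := by
  have h1 : Finset.Icc a b = Finset.Ioc (a-1) b := by ext x; simp [Finset.mem_Icc, Finset.mem_Ioc]
  have h2 : Finset.Icc a (m-1) = Finset.Ioc (a-1) (m-1) := by ext x; simp [Finset.mem_Icc, Finset.mem_Ioc]
  have h3 : Finset.Icc m b = Finset.Ioc (m-1) b := by ext x; simp [Finset.mem_Icc, Finset.mem_Ioc]
  rw [h1, h2, h3, ← Finset.sum_union (by rw [Finset.disjoint_left]; intro x hx hx'; simp [Finset.mem_Ioc] at hx hx'; omega),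
    Finset.Ioc_union_Ioc_eq_Ioc (by omega) (by omega)]

lemma icc_to_range (a : ℤ) (n : ℕ) (f : ℤ → ℝ) :
    ∑ l ∈ Finset.Icc a (a + n - 1), f l = ∑ j ∈ Finset.range n, f (a + j) := by
  apply Finset.sum_nbij' (fun l => (l - a).toNat) (fun j => a + (j:ℤ)) <;>
    intros x hx <;> simp_all [Finset.mem_Icc, Finset.mem_range] <;> omega

lemma icc_to_range' (a : ℤ) (n : ℕ) (f : ℤ → ℝ) :
    ∑ l ∈ Finset.Icc (a - n + 1) a, f l = ∑ j ∈ Finset.range n, f (a - j) := by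
  apply Finset.sum_nbij' (fun l => (a - l).toNat) (fun j => a - (j:ℤ)) <;>
    intros x hx <;> simp_all [Finset.mem_Icc, Finset.mem_range] <;> omega

lemma geom_bound (c : ℤ) (n : ℕ) :
    ∑ j ∈ Finset.range n, (2:ℝ)^(c + j) ≤ (2:ℝ)^(c + n) := by
  have : ∀ j ∈ Finset.range n, (2:ℝ)^(c + (j:ℤ)) = (2:ℝ)^c * 2^(j:ℕ) := by
    intro j _
    rw [zpow_add₀ (by norm_num : (2:ℝ) ≠ 0), zpow_natCast]
  rw [Finset.sum_congr rfl this, ← Finset.mul_sum]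
  have hg : ∑ j ∈ Finset.range n, (2:ℝ)^j = 2^n - 1 := by
    have := geom_sum_eq (by norm_num : (2:ℝ) ≠ 1) n
    rw [this]; norm_num
  rw [hg, zpow_add₀ (by norm_num : (2:ℝ) ≠ 0), zpow_natCast]
  have : (0:ℝ) < (2:ℝ)^c := by positivity
  nlinarith [pow_pos (by norm_num : (0:ℝ) < 2) n]

theorem stmt_12 (ε : ℝ) (hε0 : 0 < ε) (hε1 : ε < 1) (ξ η : ℤ)
    (SNR : ℝ) (hSNR : SNR = (2 : ℝ) ^ ξ / (2 : ℝ) ^ η) (hSNRε : SNR ≥ 1 / ε)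
    (p q : ℤ → ℝ)
    (hp : ∀ l, p l = 1 / (1 + Real.exp ((2 : ℝ) ^ ((l : ℝ) - (ξ : ℝ)))))
    (hq : ∀ l, q l = 1 / (1 + Real.exp ((2 : ℝ) ^ ((l : ℝ) - (η : ℝ)))))
    (L₁ L₂ : ℤ)
    (hL₁ : (L₁ : ℝ) ≥ -Real.logb 2 ε - (η : ℝ))
    (hL₂ : (L₂ : ℝ) ≥ -Real.logb 2 ε + (ξ : ℝ)) :
    ∑ l ∈ Finset.Icc (-L₁) L₂, (binH (bconv (p l) (q l)) - binH (q l)) ≥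
      Real.logb 2 (1 + SNR) - 5 * ε * Real.logb 2 (Real.exp 1) := by
  have hlog2 : (0:ℝ) < Real.log 2 := Real.log_pos (by norm_num)
  set d : ℤ := ξ - η with hd_def
  -- SNR = 2^d
  have hSNR' : SNR = (2:ℝ)^d := by
    rw [hSNR, hd_def, zpow_sub₀ (by norm_num : (2:ℝ) ≠ 0)]
  have hεSNR : 1/ε ≤ (2:ℝ)^d := hSNR' ▸ hSNRε
  have h2d_pos : (0:ℝ) < (2:ℝ)^d := by positivity
  have hSNR1 : (1:ℝ) < (2:ℝ)^d := lt_of_lt_of_le (one_lt_one_div hε0 hε1) hεSNR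
  have hd1 : 1 ≤ d := by
    by_contra h
    push_neg at h
    have : (2:ℝ)^d ≤ 1 := zpow_le_one_of_nonpos₀ (by norm_num) (by omega)
    linarith
  have hlogbε : Real.logb 2 ε < 0 := Real.logb_neg (by norm_num) hε0 hε1
  -- key int inequalities
  have hA : (-L₁ : ℝ) - (η:ℝ) ≤ Real.logb 2 ε := by push_cast; linarith
  have hB : (ξ:ℝ) - (L₂:ℝ) ≤ Real.logb 2 ε := by linarith
  have hdLL : d + 1 ≤ L₁ + L₂ := by
    have : (d:ℝ) < (L₁:ℝ) + (L₂:ℝ) := by push_cast [hd_def]; linarith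
    have := (by exact_mod_cast this : d < L₁ + L₂)
    omega
  -- 2^c ≤ ε for c ≤ logb 2 ε
  have hpow_le : ∀ c : ℤ, (c:ℝ) ≤ Real.logb 2 ε → (2:ℝ)^c ≤ ε := by
    intro c hc
    have : (2:ℝ)^((c:ℝ)) ≤ (2:ℝ)^(Real.logb 2 ε) :=
      (Real.rpow_le_rpow_left_iff (by norm_num)).mpr hc
    rwa [Real.rpow_intCast, Real.rpow_logb (by norm_num) (by norm_num) hε0] at this
  -- q l = p (l + d)
  have hqp : ∀ l : ℤ, q l = p (l + d) := by
    intro l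
    rw [hq, hp]
    congr 3
    push_cast [hd_def]
    ring
  -- positivity facts about p
  have hpl : ∀ l : ℤ, 0 ≤ p l ∧ p l ≤ 1/2 := by
    intro l
    have ht : (0:ℝ) < (2:ℝ)^((l:ℝ) - (ξ:ℝ)) := Real.rpow_pos_of_pos (by norm_num) _
    have hE : 1 ≤ Real.exp ((2:ℝ)^((l:ℝ) - (ξ:ℝ))) := Real.one_le_exp ht.le
    rw [hp]
    constructor
    · positivity
    · rw [div_le_div_iff₀ (by linarith) (by norm_num)]
      linarith
  have hql : ∀ l : ℤ, 0 ≤ q l ∧ q l ≤ 1/2 := by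
    intro l; rw [hqp]; exact hpl _
  -- step 1: termwise bconv bound
  have step1 : ∑ l ∈ Finset.Icc (-L₁) L₂, (binH (bconv (p l) (q l)) - binH (q l)) ≥
      ∑ l ∈ Finset.Icc (-L₁) L₂, (binH (p l) - binH (p (l + d))) := by
    apply Finset.sum_le_sum
    intro l _
    rw [← hqp l]
    have := binEntropy_bconv_ge (p l) (q l) (hpl l).1 (hpl l).2 (hql l).1 (hql l).2
    rw [binH_eq, binH_eq, binH_eq]
    have h1 : Real.binEntropy (p l) / Real.log 2 ≤ Real.binEntropy (bconv (p l) (q l)) / Real.log 2 := by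
      gcongr
    linarith
  -- telescoping
  set f : ℤ → ℝ := fun l => binH (p l) with hf
  have h0 : ∑ l ∈ Finset.Icc (-L₁) L₂, f (l + d) = ∑ l ∈ Finset.Icc (-L₁ + d) (L₂ + d), f l :=
    sum_shift _ _ _ _
  have h1 : ∑ l ∈ Finset.Icc (-L₁) L₂, f l =
      ∑ l ∈ Finset.Icc (-L₁) (-L₁ + d - 1), f l + ∑ l ∈ Finset.Icc (-L₁ + d) L₂, f l :=
    icc_split _ _ _ (by omega) (by omega) _
  have h2 : ∑ l ∈ Finset.Icc (-L₁ + d) (L₂ + d), f l =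
      ∑ l ∈ Finset.Icc (-L₁ + d) (L₂ + 1 - 1), f l + ∑ l ∈ Finset.Icc (L₂ + 1) (L₂ + d), f l :=
    icc_split _ _ _ (by omega) (by omega) _
  rw [show L₂ + 1 - 1 = L₂ by ring] at h2
  have tele : ∑ l ∈ Finset.Icc (-L₁) L₂, (binH (p l) - binH (p (l + d))) =
      ∑ l ∈ Finset.Icc (-L₁) (-L₁ + d - 1), f l - ∑ l ∈ Finset.Icc (L₂ + 1) (L₂ + d), f l := by
    rw [Finset.sum_sub_distrib]
    have : ∑ l ∈ Finset.Icc (-L₁) L₂, binH (p (l + d)) = ∑ l ∈ Finset.Icc (-L₁) L₂, f (l + d) := rfl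
    rw [this, h0]
    linarith [h1, h2]
  -- termwise entropy bounds as zpow
  have hzp : ∀ l : ℤ, (2:ℝ) ^ ((l:ℝ) - (ξ:ℝ)) = (2:ℝ) ^ (l - ξ) := by
    intro l
    rw [show ((l:ℝ) - (ξ:ℝ)) = ((l - ξ : ℤ) : ℝ) by push_cast; ring, Real.rpow_intCast]
  have hlow : ∀ l : ℤ, 1 - (2:ℝ) ^ (l - ξ) / Real.log 2 ≤ f l := by
    intro l
    have ht0 : (0:ℝ) ≤ (2:ℝ) ^ (l - ξ) := by positivity
    have hb := binEntropy_lower ((2:ℝ) ^ (l - ξ)) ht0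
    have : f l = Real.binEntropy (1 / (1 + Real.exp ((2:ℝ) ^ (l - ξ)))) / Real.log 2 := by
      rw [hf]; simp only [binH_eq, hp l, hzp l]
    rw [this]
    have h2 : (1:ℝ) - (2:ℝ)^(l-ξ)/Real.log 2 = (Real.log 2 - (2:ℝ)^(l-ξ))/Real.log 2 := by
      field_simp
    rw [h2]
    exact div_le_div_of_nonneg_right hb hlog2.le
  have hup : ∀ l : ℤ, ξ + 1 ≤ l → f l ≤ 3 * (2:ℝ) ^ (ξ - l) / Real.log 2 := by
    intro l hl
    have ht1 : (1:ℝ) ≤ (2:ℝ) ^ (l - ξ) := one_le_zpow₀ (by norm_num) (by omega)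
    have hb := binEntropy_upper ((2:ℝ) ^ (l - ξ)) ht1
    have heq : f l = Real.binEntropy (1 / (1 + Real.exp ((2:ℝ) ^ (l - ξ)))) / Real.log 2 := by
      rw [hf]; simp only [binH_eq, hp l, hzp l]
    have hinv : 3 / (2:ℝ) ^ (l - ξ) = 3 * (2:ℝ) ^ (ξ - l) := by
      rw [div_eq_mul_inv, ← zpow_neg, show -(l - ξ) = ξ - l by ring]
    rw [heq]
    have hd2 : Real.binEntropy (1 / (1 + Real.exp ((2:ℝ) ^ (l - ξ)))) / Real.log 2 ≤
        (3 / (2:ℝ) ^ (l - ξ)) / Real.log 2 := div_le_div_of_nonneg_right hb hlog2.le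
    rw [hinv] at hd2
    exact hd2
  -- edge sums
  set n : ℕ := d.toNat with hn_def
  have hn : (n:ℤ) = d := Int.toNat_of_nonneg (by omega)
  -- S1 lower bound
  have hS1 : (d:ℝ) - ε / Real.log 2 ≤ ∑ l ∈ Finset.Icc (-L₁) (-L₁ + d - 1), f l := by
    have hr : ∑ l ∈ Finset.Icc (-L₁) (-L₁ + d - 1), f l = ∑ j ∈ Finset.range n, f (-L₁ + j) := by
      rw [show -L₁ + d - 1 = -L₁ + (n:ℤ) - 1 by omega]
      exact icc_to_range _ _ _
    rw [hr]
    have hterm : ∀ j ∈ Finset.range n, 1 - (2:ℝ) ^ ((-L₁ - ξ) + j) / Real.log 2 ≤ f (-L₁ + j) := by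
      intro j _
      have := hlow (-L₁ + j)
      rwa [show -L₁ + (j:ℤ) - ξ = (-L₁ - ξ) + j by ring] at this
    have hsum := Finset.sum_le_sum hterm
    have hgeo : ∑ j ∈ Finset.range n, (2:ℝ) ^ ((-L₁ - ξ) + j) ≤ ε := by
      refine (geom_bound (-L₁ - ξ) n).trans ?_
      refine hpow_le _ ?_
      rw [show -L₁ - ξ + (n:ℤ) = -L₁ - η by omega]
      push_cast
      linarith [hA]
    have hconst : ∑ j ∈ Finset.range n, ((1:ℝ) - (2:ℝ) ^ ((-L₁ - ξ) + j) / Real.log 2) =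
        (n:ℝ) - (∑ j ∈ Finset.range n, (2:ℝ) ^ ((-L₁ - ξ) + j)) / Real.log 2 := by
      rw [Finset.sum_sub_distrib, Finset.sum_const, Finset.card_range, ← Finset.sum_div]
      simp
    have hnd : (n:ℝ) = (d:ℝ) := by exact_mod_cast congrArg (Int.cast : ℤ → ℝ) hn
    rw [hconst, hnd] at hsum
    have : (∑ j ∈ Finset.range n, (2:ℝ) ^ ((-L₁ - ξ) + j)) / Real.log 2 ≤ ε / Real.log 2 :=
      div_le_div_of_nonneg_right hgeo hlog2.le
    linarith
  -- S2 upper bound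
  have hS2 : ∑ l ∈ Finset.Icc (L₂ + 1) (L₂ + d), f l ≤ 3 * ε / Real.log 2 := by
    have hr : ∑ l ∈ Finset.Icc (L₂ + 1) (L₂ + d), f l = ∑ j ∈ Finset.range n, f (L₂ + d - j) := by
      rw [show L₂ + 1 = (L₂ + d) - (n:ℤ) + 1 by omega]
      exact icc_to_range' _ _ _
    rw [hr]
    have hξL₂ : ξ + 1 ≤ L₂ := by
      have : (ξ:ℝ) < (L₂:ℝ) := by linarith [hlogbε, hB]
      have : ξ < L₂ := by exact_mod_cast this
      omega
    have hterm : ∀ j ∈ Finset.range n, f (L₂ + d - j) ≤ 3 * (2:ℝ) ^ ((ξ - L₂ - d) + j) / Real.log 2 := by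
      intro j hj
      simp only [Finset.mem_range] at hj
      have hjd : (j:ℤ) < d := by omega
      have := hup (L₂ + d - j) (by omega)
      rwa [show ξ - (L₂ + d - j) = (ξ - L₂ - d) + j by ring] at this
    have hsum := Finset.sum_le_sum hterm
    have hgeo : ∑ j ∈ Finset.range n, (2:ℝ) ^ ((ξ - L₂ - d) + j) ≤ ε := by
      refine (geom_bound (ξ - L₂ - d) n).trans ?_
      refine hpow_le _ ?_
      rw [show ξ - L₂ - d + (n:ℤ) = ξ - L₂ by omega]
      push_cast
      linarith [hB]
    have hconst : ∑ j ∈ Finset.range n, 3 * (2:ℝ) ^ ((ξ - L₂ - d) + j) / Real.log 2 =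
        3 * (∑ j ∈ Finset.range n, (2:ℝ) ^ ((ξ - L₂ - d) + j)) / Real.log 2 := by
      rw [← Finset.sum_div, ← Finset.mul_sum]
    rw [hconst] at hsum
    have : 3 * (∑ j ∈ Finset.range n, (2:ℝ) ^ ((ξ - L₂ - d) + j)) / Real.log 2 ≤ 3 * ε / Real.log 2 := by
      apply div_le_div_of_nonneg_right _ hlog2.le
      linarith
    linarith
  -- final comparison
  have hlogb_e : Real.logb 2 (Real.exp 1) = 1 / Real.log 2 := by
    rw [Real.logb, Real.log_exp, one_div]
  have h2dinv : (2:ℝ) ^ (-d) ≤ ε := by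
    rw [zpow_neg]
    rw [inv_le_comm₀ h2d_pos hε0]
    rwa [one_div] at hεSNR
  have hlogSNR : Real.logb 2 (1 + SNR) ≤ (d:ℝ) + ε / Real.log 2 := by
    rw [hSNR', Real.logb]
    have hfact : (1:ℝ) + (2:ℝ)^d = (2:ℝ)^d * (1 + (2:ℝ)^(-d)) := by
      rw [mul_add, mul_one, ← zpow_add₀ (by norm_num : (2:ℝ) ≠ 0)]
      simp
      ring
    rw [hfact, Real.log_mul (by positivity) (by positivity), Real.log_zpow]
    have hsm : Real.log (1 + (2:ℝ)^(-d)) ≤ ε := by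
      have h1 := Real.log_le_sub_one_of_pos (show (0:ℝ) < 1 + (2:ℝ)^(-d) by positivity)
      linarith
    rw [add_div, mul_div_assoc, div_self hlog2.ne', mul_one]
    have : Real.log (1 + (2:ℝ)^(-d)) / Real.log 2 ≤ ε / Real.log 2 :=
      div_le_div_of_nonneg_right hsm hlog2.le
    linarith
  rw [hlogb_e]
  rw [ge_iff_le]
  calc Real.logb 2 (1 + SNR) - 5 * ε * (1 / Real.log 2)
      ≤ ((d:ℝ) + ε / Real.log 2) - 5 * ε * (1 / Real.log 2) := by linarith
    _ ≤ (∑ l ∈ Finset.Icc (-L₁) (-L₁ + d - 1), f l - ∑ l ∈ Finset.Icc (L₂ + 1) (L₂ + d), f l) := by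
        rw [one_div]
        have : 5 * ε * (Real.log 2)⁻¹ = 5 * (ε / Real.log 2) := by rw [div_eq_mul_inv]; ring
        rw [this]
        have h3 : 3 * ε / Real.log 2 = 3 * (ε / Real.log 2) := by ring
        linarith [hS1, hS2]
    _ = ∑ l ∈ Finset.Icc (-L₁) L₂, (binH (p l) - binH (p (l + d))) := tele.symm
    _ ≤ ∑ l ∈ Finset.Icc (-L₁) L₂, (binH (bconv (p l) (q l)) - binH (q l)) := step1
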